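/- arXiv:2004.05872 — 4 statements merged into one kernel-verified Lean document; each statement's English description precedes it below -/
import Mathlib

section
/- Let J be an N×N complex matrix with eigenvalues λ_1, ..., λ_N and f(λ) = det(λI - J). If λ_i is an eigenvalue of J, then ∑_{k=1}^N det(((λ_i I - J)^2)_{k|k}) = f'(λ_i)^2. -/
open Finset Polynomial

lemma derivative_finset_prod {R : Type*} [CommRing R] {ι : Type*} [DecidableEq ι]
    (s : Finset ι) (f : ι → R[X]) :
    derivative (∏ b ∈ s, f b) = ∑ b ∈ s, (∏ a ∈ s.erase b, f a) * derivative (f b) := by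
  classical
  induction s using Finset.induction_on with
  | empty => simp
  | insert a s h ih =>
    rw [Finset.prod_insert h, derivative_mul, ih, Finset.sum_insert h,
      Finset.erase_insert h, Finset.mul_sum]
    congr 1
    · rw [mul_comm]
    · refine Finset.sum_congr rfl fun b hb => ?_
      rw [Finset.erase_insert_of_ne (by rintro rfl; exact h hb),
        Finset.prod_insert (fun hc => h (Finset.mem_of_mem_erase hc))]
      ring

lemma derivative_det' {N : Type*} [DecidableEq N] [Fintype N] {R : Type*} [CommRing R]
    (A : Matrix N N R[X]) :
    derivative A.det = ∑ k, (A.updateCol k (fun i => derivative (A i k))).det := by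
  rw [Matrix.det_apply', derivative_sum]
  have h : ∀ k, (A.updateCol k (fun i => derivative (A i k))).det
      = ∑ σ : Equiv.Perm N, ((Equiv.Perm.sign σ : ℤ) : R[X]) *
          ((∏ i ∈ Finset.univ.erase k, A (σ i) i) * derivative (A (σ k) k)) := by
    intro k
    rw [Matrix.det_apply']
    refine Finset.sum_congr rfl fun σ _ => ?_
    congr 1
    rw [← Finset.mul_prod_erase Finset.univ _ (Finset.mem_univ k)]
    rw [Matrix.updateCol_apply, if_pos rfl, mul_comm]
    congr 1
    refine Finset.prod_congr rfl fun i hi => ?_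
    rw [Matrix.updateCol_apply, if_neg (Finset.ne_of_mem_erase hi)]
  simp_rw [h]
  rw [Finset.sum_comm]
  refine Finset.sum_congr rfl fun σ _ => ?_
  rw [derivative_mul, derivative_intCast, zero_mul, zero_add, derivative_finset_prod,
    Finset.mul_sum]

lemma det_updateColumn_single {N : Type*} [DecidableEq N] [Fintype N] {R : Type*} [CommRing R]
    (B : Matrix N N R) (k : N) :
    (B.updateCol k (Pi.single k 1)).det = B.adjugate k k := by
  rw [← Matrix.det_transpose, ← Matrix.updateRow_transpose, ← Matrix.adjugate_apply,
    ← Matrix.adjugate_transpose, Matrix.transpose_apply]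

lemma map_eval_charmatrix {N : Type*} [DecidableEq N] [Fintype N] {R : Type*} [CommRing R]
    (A : Matrix N N R) (z : R) :
    (Matrix.charmatrix A).map (eval z) = z • (1 : Matrix N N R) - A := by
  ext i j
  by_cases hij : i = j <;>
    simp [Matrix.charmatrix_apply, hij, Matrix.one_apply, Matrix.diagonal_apply]

lemma eval_charpoly' {N : Type*} [DecidableEq N] [Fintype N] {R : Type*} [CommRing R]
    (A : Matrix N N R) (z : R) :
    A.charpoly.eval z = (z • (1 : Matrix N N R) - A).det := by
  have : A.charpoly.eval z = (evalRingHom z) (Matrix.charmatrix A).det := rfl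
  rw [this, RingHom.map_det, ← map_eval_charmatrix A z]
  rfl

lemma jacobi' {N : Type*} [DecidableEq N] [Fintype N] {R : Type*} [CommRing R]
    (A : Matrix N N R) (z : R) :
    A.charpoly.derivative.eval z = Matrix.trace ((z • (1 : Matrix N N R) - A).adjugate) := by
  rw [Matrix.charpoly, derivative_det']
  have hcol : ∀ k, ((Matrix.charmatrix A).updateCol k
      (fun i => derivative (Matrix.charmatrix A i k))) =
      (Matrix.charmatrix A).updateCol k (Pi.single k 1) := by
    intro k
    have hfun : (fun i => derivative (Matrix.charmatrix A i k)) = Pi.single k (1 : R[X]) := by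
      funext i
      by_cases hik : i = k <;>
        simp [Matrix.charmatrix_apply, hik, Pi.single_apply, Matrix.diagonal_apply]
    rw [hfun]
  simp_rw [hcol]
  rw [eval_finset_sum]
  have : ∀ k, (((Matrix.charmatrix A).updateCol k (Pi.single k 1)).det).eval z
      = ((z • (1 : Matrix N N R) - A).updateCol k (Pi.single k 1)).det := by
    intro k
    have h1 : (((Matrix.charmatrix A).updateCol k (Pi.single k 1)).det).eval z
        = ((((Matrix.charmatrix A).updateCol k (Pi.single k 1))).map (eval z)).det := by
      rw [show ((((Matrix.charmatrix A).updateCol k (Pi.single k 1)).det).eval z)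
        = (evalRingHom z) (((Matrix.charmatrix A).updateCol k (Pi.single k 1)).det) from rfl,
        RingHom.map_det]; rfl
    rw [h1]
    congr 1
    ext i j
    by_cases hjk : j = k
    · subst hjk
      simp [Matrix.updateCol_apply, Pi.single_apply]
      by_cases hik : i = j <;> simp [hik]
    · have := map_eval_charmatrix A z
      simp only [Matrix.map_apply, Matrix.updateCol_apply, if_neg hjk]
      rw [← Matrix.map_apply (f := eval z), this]
  simp_rw [this, det_updateColumn_single]
  rfl

lemma factor_sq {n : ℕ} (M : Matrix (Fin (n + 1)) (Fin (n + 1)) ℂ) {s u : ℂ} (hs : s^2 = -u) :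
    u • (1 : Matrix (Fin (n+1)) (Fin (n+1)) ℂ) + M^2 = (-1:ℂ) • ((s•1 - M) * (s•1 + M)) := by
  have h : (s•1 - M) * (s•1 + M) = (s*s) • (1 : Matrix (Fin (n+1)) (Fin (n+1)) ℂ) - M * M := by
    simp only [sub_mul, mul_add, Matrix.smul_mul, Matrix.mul_smul, Matrix.one_mul,
      Matrix.mul_one, smul_smul]
    abel
  rw [pow_two, h, show s * s = -u by rw [← pow_two, hs]]
  module

theorem stmt6 (n : ℕ) (J : Matrix (Fin (n + 1)) (Fin (n + 1)) ℂ)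
    (lam : Fin (n + 1) → ℂ)
    (hJ : J.charpoly = ∏ j, (X - C (lam j)))
    (f : ℂ → ℂ) (hf : f = fun z => Matrix.det (z • (1 : Matrix (Fin (n + 1)) (Fin (n + 1)) ℂ) - J))
    (i : Fin (n + 1)) :
    ∑ k : Fin (n + 1),
        Matrix.det (((lam i • (1 : Matrix (Fin (n + 1)) (Fin (n + 1)) ℂ) - J) ^ 2).submatrix
          k.succAbove k.succAbove) =
      (deriv f (lam i)) ^ 2 := by
  classical
  set M : Matrix (Fin (n+1)) (Fin (n+1)) ℂ := lam i • 1 - J with hM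
  set d : Fin (n+1) → ℂ := fun j => lam i - lam j with hd
  set D : ℂ := ∏ j ∈ Finset.univ.erase i, d j with hD
  -- determinant formula for z•1 - J
  have hdetJ : ∀ z : ℂ, (z • (1 : Matrix (Fin (n+1)) (Fin (n+1)) ℂ) - J).det
      = ∏ j, (z - lam j) := by
    intro z
    rw [← eval_charpoly', hJ, eval_prod]
    simp
  -- Step B : deriv f (lam i) = D
  have hfp : f = fun z => (J.charpoly).eval z := by
    funext z
    rw [hf, eval_charpoly']
  have hderiv : deriv f (lam i) = D := by
    rw [hfp, Polynomial.deriv, hJ, derivative_finset_prod, eval_finset_sum]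
    rw [Finset.sum_eq_single i]
    · simp [eval_prod, hD, hd]
    · intro k _ hk
      rw [eval_mul, eval_prod]
      rw [Finset.prod_eq_zero (Finset.mem_erase.mpr ⟨hk.symm, Finset.mem_univ i⟩)]
      · simp
      · simp
    · simp
  -- Step C : charpoly of -(M^2)
  have hC : (-(M^2)).charpoly = ∏ j, (X + C (d j ^ 2)) := by
    apply Polynomial.funext
    intro u
    rw [eval_charpoly', sub_neg_eq_add, eval_prod]
    obtain ⟨s, hs⟩ : ∃ s : ℂ, s ^ 2 = -u :=
      IsAlgClosed.exists_pow_nat_eq (-u) (n := 2) (by norm_num)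
    rw [factor_sq M hs, Matrix.det_smul, Matrix.det_mul]
    have e1 : s • (1 : Matrix (Fin (n+1)) (Fin (n+1)) ℂ) - M
        = (-1:ℂ) • ((lam i - s) • 1 - J) := by rw [hM]; module
    have e2 : s • (1 : Matrix (Fin (n+1)) (Fin (n+1)) ℂ) + M
        = (s + lam i) • 1 - J := by rw [hM]; module
    rw [e1, e2, Matrix.det_smul, hdetJ, hdetJ]
    simp only [Fintype.card_fin]
    have hsign : ((-1:ℂ))^(n+1) * ((-1:ℂ))^(n+1) = 1 := by
      rw [← pow_add]; exact Even.neg_one_pow ⟨n+1, rfl⟩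
    rw [show ((-1:ℂ)) ^ (n + 1) *
          ((((-1:ℂ)) ^ (n + 1) * ∏ j, (lam i - s - lam j)) * ∏ j, (s + lam i - lam j))
        = (((-1:ℂ))^(n+1) * ((-1:ℂ))^(n+1)) *
          ((∏ j, (lam i - s - lam j)) * ∏ j, (s + lam i - lam j)) from by ring,
      hsign, one_mul, ← Finset.prod_mul_distrib]
    refine Finset.prod_congr rfl fun j _ => ?_
    simp only [eval_add, eval_X, eval_C, hd]
    linear_combination (-1 : ℂ) * hs
  -- Step D/E : LHS = trace adjugate (M^2) = ∏_{j ≠ i} d j ^ 2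
  have hLHS : ∑ k : Fin (n+1), Matrix.det ((M ^ 2).submatrix k.succAbove k.succAbove)
      = ∏ j ∈ Finset.univ.erase i, d j ^ 2 := by
    have h1 : ∀ k : Fin (n+1), Matrix.det ((M ^ 2).submatrix k.succAbove k.succAbove)
        = (M ^ 2).adjugate k k := by
      intro k
      rw [Matrix.adjugate_fin_succ_eq_det_submatrix, Even.neg_one_pow ⟨k, rfl⟩, one_mul]
    simp_rw [h1]
    have h2 : ∑ k, (M ^ 2).adjugate k k = Matrix.trace ((M ^ 2).adjugate) := rfl
    rw [h2]
    have h3 : (M ^ 2 : Matrix (Fin (n+1)) (Fin (n+1)) ℂ)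
        = (0 : ℂ) • 1 - (-(M^2)) := by module
    rw [h3, ← jacobi', hC, derivative_finset_prod, eval_finset_sum]
    rw [Finset.sum_eq_single i]
    · simp [eval_prod, hd]
    · intro k _ hk
      rw [eval_mul, eval_prod]
      rw [Finset.prod_eq_zero (Finset.mem_erase.mpr ⟨hk.symm, Finset.mem_univ i⟩)]
      · simp
      · simp [hd]
    · simp
  rw [hLHS, hderiv, hD, ← Finset.prod_pow]
end

section
/- Let J be an N×N complex Hermitian matrix with distinct eigenvalues λ_1, ..., λ_N. Then ∑_{k=1}^N det(((λ_i I - J)(λ_i I - J)*)_{k|k}) = ∏_{k ≠ i} (λ_i - λ_k)^2 for each i. -/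
open Finset Polynomial Matrix

private lemma charpoly_diag_aux {m : Type*} [DecidableEq m] [Fintype m] (v : m → ℂ) :
    (Matrix.diagonal v).charpoly = ∏ j, (X - C (v j)) := by
  have h : charmatrix (Matrix.diagonal v) = Matrix.diagonal (fun j => X - C (v j)) := by
    ext a b
    by_cases hab : a = b <;> simp [charmatrix_apply, Matrix.diagonal_apply, hab]
  rw [Matrix.charpoly, h, Matrix.det_diagonal]

private lemma charpoly_conj_aux {m : Type*} [DecidableEq m] [Fintype m] (U M V : Matrix m m ℂ)
    (h1 : U * V = 1) : (U * M * V).charpoly = M.charpoly := by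
  let f : Matrix m m ℂ →+* Matrix m m ℂ[X] := (C : ℂ →+* ℂ[X]).mapMatrix
  have hs : f U * Matrix.scalar m (X : ℂ[X]) * f V = Matrix.scalar m (X : ℂ[X]) := by
    rw [(Matrix.scalar_commute (X : ℂ[X]) (fun r => Commute.all _ r) (f U)).symm.eq, mul_assoc,
      ← _root_.map_mul, h1, _root_.map_one, mul_one]
  have key : charmatrix (U * M * V) = f U * charmatrix M * f V := by
    show Matrix.scalar m (X : ℂ[X]) - f (U * M * V) =
      f U * (Matrix.scalar m (X : ℂ[X]) - f M) * f V
    rw [_root_.map_mul, _root_.map_mul, mul_sub, sub_mul, hs]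
  have hdet : (f U).det * (f V).det = 1 := by
    rw [← Matrix.det_mul, ← _root_.map_mul, h1, _root_.map_one, Matrix.det_one]
  rw [Matrix.charpoly, key, Matrix.det_mul, Matrix.det_mul, Matrix.charpoly]
  rw [mul_comm, ← mul_assoc, mul_comm (f V).det, hdet, one_mul]

private lemma perm_of_prod_eq_aux {N : ℕ} (lam mu : Fin N → ℂ) (hd : Function.Injective lam)
    (h : ∏ j, (X - C (lam j)) = ∏ j, (X - C (mu j))) :
    ∃ e : Equiv.Perm (Fin N), ∀ j, mu j = lam (e j) := by
  have h1 : (Finset.univ.val.map lam) = (Finset.univ.val.map mu) := by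
    have h' := h
    rw [Finset.prod_eq_multiset_prod, Finset.prod_eq_multiset_prod] at h'
    have h2 : ((Finset.univ.val.map lam).map (fun a => X - C a)).prod.roots
        = ((Finset.univ.val.map mu).map (fun a => X - C a)).prod.roots := by
      simpa [Multiset.map_map, Function.comp_def] using congrArg Polynomial.roots h'
    rwa [Polynomial.roots_multiset_prod_X_sub_C, Polynomial.roots_multiset_prod_X_sub_C] at h2
  have hnodup : (Finset.univ.val.map mu).Nodup := by
    rw [← h1]; exact Finset.univ.nodup.map hd
  have hmu : Function.Injective mu := by
    intro a b hab
    exact (Multiset.nodup_map_iff_inj_on Finset.univ.nodup).mp hnodup a (Finset.mem_univ a) b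
      (Finset.mem_univ b) hab
  have hex : ∀ j, ∃ k, lam k = mu j := by
    intro j
    have : mu j ∈ Finset.univ.val.map lam := by
      rw [h1]; exact Multiset.mem_map_of_mem _ (Finset.mem_univ j)
    obtain ⟨k, _, hk⟩ := Multiset.mem_map.mp this
    exact ⟨k, hk⟩
  choose g hg using hex
  have hginj : Function.Injective g := fun a b hab => hmu (by rw [← hg a, ← hg b, hab])
  exact ⟨Equiv.ofBijective g (Finite.injective_iff_bijective.mp hginj), fun j => (hg j).symm⟩

theorem stmt9 (n : ℕ) (J : Matrix (Fin (n + 1)) (Fin (n + 1)) ℂ)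
    (hH : J.IsHermitian)
    (lam : Fin (n + 1) → ℂ) (hd : Function.Injective lam)
    (hJ : J.charpoly = ∏ j, (X - C (lam j)))
    (i : Fin (n + 1)) :
    ∑ k : Fin (n + 1),
        Matrix.det
          (((lam i • (1 : Matrix (Fin (n + 1)) (Fin (n + 1)) ℂ) - J) *
            (lam i • (1 : Matrix (Fin (n + 1)) (Fin (n + 1)) ℂ) - J)ᴴ).submatrix
          k.succAbove k.succAbove) =
      ∏ k ∈ Finset.univ.erase i, (lam i - lam k) ^ 2 := by
  classical
  set U : Matrix (Fin (n+1)) (Fin (n+1)) ℂ :=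
    ((hH.eigenvectorUnitary : Matrix.unitaryGroup (Fin (n+1)) ℂ) :
      Matrix (Fin (n+1)) (Fin (n+1)) ℂ) with hUdef
  set μ : Fin (n+1) → ℂ := fun j => ((hH.eigenvalues j : ℝ) : ℂ) with hμ
  have hspec : J = U * Matrix.diagonal μ * star U := hH.spectral_theorem
  have h1 : U * star U = 1 := (Matrix.mem_unitaryGroup_iff).mp hH.eigenvectorUnitary.2
  have h2 : star U * U = 1 := (Matrix.mem_unitaryGroup_iff').mp hH.eigenvectorUnitary.2
  -- charpoly comparison
  have hcp : (∏ j, (X - C (lam j))) = ∏ j, (X - C (μ j)) := by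
    rw [← hJ, hspec, charpoly_conj_aux _ _ _ h1, charpoly_diag_aux]
  obtain ⟨e, he⟩ := perm_of_prod_eq_aux lam μ hd hcp
  -- lam i is real
  have hreal : (starRingEnd ℂ) (lam i) = lam i := by
    have : lam i = μ (e.symm i) := by rw [he (e.symm i), Equiv.apply_symm_apply]
    rw [this, hμ]
    exact Complex.conj_ofReal _
  -- A and its diagonalization
  set A : Matrix (Fin (n+1)) (Fin (n+1)) ℂ := lam i • 1 - J with hA
  set B : Matrix (Fin (n+1)) (Fin (n+1)) ℂ := Matrix.diagonal (fun j => lam i - μ j) with hB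
  have hAeq : A = U * B * star U := by
    rw [hA, hspec, hB]
    have hsmul : lam i • (1 : Matrix (Fin (n+1)) (Fin (n+1)) ℂ) =
        U * (lam i • 1) * star U := by
      rw [Matrix.mul_smul, Matrix.smul_mul, mul_one, h1]
    rw [hsmul, ← Matrix.sub_mul, ← Matrix.mul_sub]
    congr 1
    congr 1
    rw [Matrix.smul_eq_diagonal_mul, mul_one, Matrix.diagonal_sub]
  have hBH : Bᴴ = B := by
    rw [hB, Matrix.diagonal_conjTranspose]
    have hf : (star fun j => lam i - μ j) = fun j => lam i - μ j := by
      funext j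
      show star (lam i - μ j) = lam i - μ j
      rw [star_sub]
      have h3 : star (μ j) = μ j := Complex.conj_ofReal _
      rw [h3]
      exact congrArg (· - μ j) hreal
    rw [hf]
  have hAH : Aᴴ = A := by
    rw [hAeq]
    simp only [Matrix.star_eq_conjTranspose, Matrix.conjTranspose_mul,
      Matrix.conjTranspose_conjTranspose, hBH, Matrix.mul_assoc]
  have hAAH : A * Aᴴ = U * Matrix.diagonal (fun j => (lam i - μ j)^2) * star U := by
    rw [hAH, hAeq]
    calc U * B * star U * (U * B * star U)
        = U * (B * (star U * U) * B) * star U := by noncomm_ring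
      _ = U * (B * B) * star U := by rw [h2, mul_one]
      _ = _ := by
          have hBB : B * B = Matrix.diagonal (fun j => (lam i - μ j)^2) := by
            rw [hB, Matrix.diagonal_mul_diagonal]
            have hfun : (fun j => (lam i - μ j) * (lam i - μ j)) =
                fun j => (lam i - μ j) ^ 2 := funext fun j => (sq (lam i - μ j)).symm
            rw [hfun]
          rw [hBB]
  -- sum of principal minors = trace of adjugate
  have hsum : ∑ k : Fin (n+1), ((A * Aᴴ).submatrix k.succAbove k.succAbove).det
      = Matrix.trace (Matrix.adjugate (A * Aᴴ)) := by
    rw [Matrix.trace]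
    congr 1
    funext k
    rw [Matrix.diag, Matrix.adjugate_fin_succ_eq_det_submatrix]
    have : ((-1 : ℂ)) ^ ((k : ℕ) + (k : ℕ)) = 1 := by
      rw [← two_mul, pow_mul]; norm_num
    rw [this, one_mul]
  have htr : Matrix.trace (Matrix.adjugate (A * Aᴴ)) =
      ∑ k, ∏ j ∈ Finset.univ.erase k, (lam i - μ j)^2 := by
    rw [hAAH, Matrix.adjugate_mul_distrib, Matrix.adjugate_mul_distrib, ← Matrix.mul_assoc,
      Matrix.trace_mul_cycle, ← Matrix.adjugate_mul_distrib, h2, Matrix.adjugate_one,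
      Matrix.one_mul, Matrix.adjugate_diagonal, Matrix.trace_diagonal]
  -- reindex
  have hre : ∑ k, ∏ j ∈ Finset.univ.erase k, (lam i - μ j)^2
      = ∑ k, ∏ j ∈ Finset.univ.erase k, (lam i - lam j)^2 := by
    have hterm : ∀ k, ∏ j ∈ Finset.univ.erase k, (lam i - μ j)^2
        = ∏ j ∈ Finset.univ.erase (e k), (lam i - lam j)^2 := by
      intro k
      calc ∏ j ∈ Finset.univ.erase k, (lam i - μ j)^2
          = ∏ j ∈ Finset.univ.erase k, (lam i - lam (e j))^2 :=
            Finset.prod_congr rfl (fun j _ => by rw [he j])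
        _ = ∏ j ∈ (Finset.univ.erase k).image e, (lam i - lam j)^2 :=
            (Finset.prod_image (f := fun t => (lam i - lam t)^2) (fun a _ b _ hab => e.injective hab)).symm
        _ = ∏ j ∈ Finset.univ.erase (e k), (lam i - lam j)^2 := by
            rw [Finset.image_erase e.injective, Finset.image_univ_equiv]
    calc ∑ k, ∏ j ∈ Finset.univ.erase k, (lam i - μ j)^2
        = ∑ k, ∏ j ∈ Finset.univ.erase (e k), (lam i - lam j)^2 :=
          Finset.sum_congr rfl (fun k _ => hterm k)
      _ = _ := Equiv.sum_comp e (fun m => ∏ j ∈ Finset.univ.erase m, (lam i - lam j)^2)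
  rw [hsum, htr, hre]
  refine Finset.sum_eq_single i (fun m _ hmi => ?_) (fun h => absurd (Finset.mem_univ i) h)
  exact Finset.prod_eq_zero (Finset.mem_erase.mpr ⟨Ne.symm hmi, Finset.mem_univ i⟩) (by simp)
end

section
/- Let J be an N×N complex Hermitian matrix with distinct eigenvalues λ_1, ..., λ_N and define O_{ij} := (∑_{k=1}^N det(((λ_i I - J)(λ_j I - J)*)_{k|k})) / (∏_{p ≠ i}(λ_i - λ_p) · ∏_{q ≠ j} conj(λ_j - λ_q)). Then O_{ij} = δ_{ij} for all i, j. -/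
open Finset Polynomial Matrix ComplexConjugate

lemma eval_charpoly_aux {N : ℕ} (M : Matrix (Fin N) (Fin N) ℂ) (z : ℂ) :
    M.charpoly.eval z = (z • (1 : Matrix (Fin N) (Fin N) ℂ) - M).det := by
  rw [Matrix.charpoly, ← Polynomial.coe_evalRingHom, RingHom.map_det]
  congr 1
  ext a b
  by_cases h : a = b <;>
    simp [Matrix.charmatrix_apply, Matrix.one_apply, h, Matrix.diagonal_apply,
      Matrix.sub_apply, Matrix.smul_apply]

set_option maxHeartbeats 1000000 in
theorem stmt10 (n : ℕ) (J : Matrix (Fin (n + 1)) (Fin (n + 1)) ℂ)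
    (hH : J.IsHermitian)
    (lam : Fin (n + 1) → ℂ) (hd : Function.Injective lam)
    (hJ : J.charpoly = ∏ j, (X - C (lam j)))
    (i j : Fin (n + 1)) :
    (∑ k : Fin (n + 1),
        Matrix.det
          (((lam i • (1 : Matrix (Fin (n + 1)) (Fin (n + 1)) ℂ) - J) *
            (lam j • (1 : Matrix (Fin (n + 1)) (Fin (n + 1)) ℂ) - J)ᴴ).submatrix
          k.succAbove k.succAbove)) /
      ((∏ p ∈ Finset.univ.erase i, (lam i - lam p)) *
        ∏ q ∈ Finset.univ.erase j, conj (lam j - lam q)) =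
      if i = j then 1 else 0 := by
  classical
  set U : Matrix (Fin (n + 1)) (Fin (n + 1)) ℂ :=
    (hH.eigenvectorUnitary : Matrix (Fin (n + 1)) (Fin (n + 1)) ℂ) with hUdef
  have hU1 : star U * U = 1 := (Matrix.mem_unitaryGroup_iff').mp hH.eigenvectorUnitary.2
  have hU2 : U * star U = 1 := (Matrix.mem_unitaryGroup_iff).mp hH.eigenvectorUnitary.2
  set μ : Fin (n + 1) → ℂ := RCLike.ofReal ∘ hH.eigenvalues with hμdef
  have hμreal : ∀ k, conj (μ k) = μ k := fun k => RCLike.conj_ofReal _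
  have hspec : J = U * diagonal μ * star U := hH.spectral_theorem
  -- key similarity for z • 1 - J
  have key : ∀ z : ℂ, z • (1 : Matrix (Fin (n + 1)) (Fin (n + 1)) ℂ) - J
      = U * diagonal (fun l => z - μ l) * star U := by
    intro z
    have h1 : diagonal (fun l => z - μ l)
        = z • (1 : Matrix (Fin (n + 1)) (Fin (n + 1)) ℂ) - diagonal μ := by
      rw [Matrix.smul_one_eq_diagonal, ← Matrix.diagonal_sub]
    have h2 : U * (z • (1 : Matrix (Fin (n + 1)) (Fin (n + 1)) ℂ) - diagonal μ) * star U
        = z • (U * star U) - U * diagonal μ * star U := by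
      rw [Matrix.mul_sub, Matrix.sub_mul, Matrix.mul_smul, Matrix.mul_one, Matrix.smul_mul]
    rw [h1, h2, hU2, ← hspec]
  -- determinant identity
  have hdet : ∀ z : ℂ, (∏ l, (z - μ l)) = ∏ m, (z - lam m) := by
    intro z
    have h1 : (z • (1 : Matrix (Fin (n + 1)) (Fin (n + 1)) ℂ) - J).det = ∏ l, (z - μ l) := by
      rw [key z, Matrix.det_mul, Matrix.det_mul, mul_comm, ← mul_assoc, ← Matrix.det_mul, hU1,
        Matrix.det_one, one_mul, Matrix.det_diagonal]
    have h2 : (z • (1 : Matrix (Fin (n + 1)) (Fin (n + 1)) ℂ) - J).det = ∏ m, (z - lam m) := by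
      rw [← eval_charpoly_aux, hJ]
      simp [eval_prod]
    rw [← h1, h2]
  -- polynomial identity and multiset of roots
  have hpoly : (∏ l, (X - C (μ l))) = ∏ m, (X - C (lam m)) := by
    apply Polynomial.funext
    intro z
    simpa [eval_prod] using hdet z
  have hroots : ∀ v : Fin (n + 1) → ℂ,
      (∏ l, (X - C (v l))).roots = Multiset.map v Finset.univ.val := by
    intro v
    have h := Polynomial.roots_multiset_prod_X_sub_C (Finset.univ.val.map v)
    rwa [Multiset.map_map, ← Finset.prod_eq_multiset_prod, Function.comp_def] at h
  have hms : Multiset.map μ Finset.univ.val = Multiset.map lam Finset.univ.val := by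
    rw [← hroots μ, ← hroots lam, hpoly]
  -- build the permutation
  have hex : ∀ m : Fin (n + 1), ∃ k, μ k = lam m := by
    intro m
    have : lam m ∈ Multiset.map μ Finset.univ.val := by
      rw [hms]
      exact Multiset.mem_map.mpr ⟨m, by simp, rfl⟩
    obtain ⟨k, _, hk⟩ := Multiset.mem_map.mp this
    exact ⟨k, hk⟩
  choose g hg using hex
  have hginj : Function.Injective g := by
    intro a b hab
    apply hd
    rw [← hg a, ← hg b, hab]
  have hgbij : Function.Bijective g := (Finite.injective_iff_bijective).mp hginj
  set σ : Fin (n + 1) ≃ Fin (n + 1) := Equiv.ofBijective g hgbij with hσdef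
  have hμlam : ∀ k, μ k = lam (σ.symm k) := by
    intro k
    rw [← hg (σ.symm k)]
    congr 1
    exact (σ.apply_symm_apply k).symm
  have hreal : ∀ m, conj (lam m) = lam m := by
    intro m
    rw [← hg m, hμreal]
  -- the diagonal entries
  set e : Fin (n + 1) → ℂ := fun l => (lam i - μ l) * (lam j - μ l) with hedef
  set M : Matrix (Fin (n + 1)) (Fin (n + 1)) ℂ :=
    (lam i • (1 : Matrix (Fin (n + 1)) (Fin (n + 1)) ℂ) - J) *
      (lam j • (1 : Matrix (Fin (n + 1)) (Fin (n + 1)) ℂ) - J)ᴴ with hMdef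
  have hM : M = U * diagonal e * star U := by
    rw [hMdef, key (lam i), key (lam j)]
    rw [Matrix.conjTranspose_mul, Matrix.conjTranspose_mul, Matrix.diagonal_conjTranspose]
    have hsU : (star U)ᴴ = U := by simp [Matrix.star_eq_conjTranspose]
    have hUC : Uᴴ = star U := rfl
    rw [hsU, hUC]
    have hstar : (star fun l => lam j - μ l) = fun l => lam j - μ l := by
      funext l
      simp only [Pi.star_apply, star_sub]
      change conj (lam j) - conj (μ l) = _
      rw [hreal, hμreal]
    rw [hstar]
    simp only [Matrix.mul_assoc]
    rw [← Matrix.mul_assoc (star U) U, hU1, Matrix.one_mul,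
      ← Matrix.mul_assoc (diagonal fun l => lam i - μ l), Matrix.diagonal_mul_diagonal]
  -- numerator as trace of adjugate
  have hnum : (∑ k : Fin (n + 1), Matrix.det (M.submatrix k.succAbove k.succAbove))
      = ∑ k, ∏ l ∈ Finset.univ.erase k, e l := by
    have h1 : ∀ k : Fin (n + 1), Matrix.det (M.submatrix k.succAbove k.succAbove)
        = Matrix.adjugate M k k := by
      intro k
      rw [Matrix.adjugate_fin_succ_eq_det_submatrix]
      rw [Even.neg_one_pow ⟨(k : ℕ), by ring⟩, one_mul]
    simp_rw [h1]
    have h2 : (∑ k : Fin (n + 1), Matrix.adjugate M k k)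
        = Matrix.trace (Matrix.adjugate M) := rfl
    rw [h2, hM, Matrix.adjugate_mul_distrib, Matrix.adjugate_mul_distrib,
      Matrix.trace_mul_comm, Matrix.mul_assoc, ← Matrix.adjugate_mul_distrib, hU1,
      Matrix.adjugate_one, Matrix.mul_one, Matrix.adjugate_diagonal, Matrix.trace_diagonal]
  -- reindex the sum
  set f : Fin (n + 1) → ℂ := fun m => (lam i - lam m) * (lam j - lam m) with hfdef
  have hsum : (∑ k, ∏ l ∈ Finset.univ.erase k, e l)
      = ∑ m, ∏ l ∈ Finset.univ.erase m, f l := by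
    have he : ∀ l, e l = f (σ.symm l) := by
      intro l
      show (lam i - μ l) * (lam j - μ l) = _
      rw [hμlam l]
    simp_rw [he]
    have hinner : ∀ k : Fin (n + 1), (∏ l ∈ Finset.univ.erase k, f (σ.symm l))
        = ∏ m ∈ Finset.univ.erase (σ.symm k), f m := by
      intro k
      have hset : Finset.univ.erase (σ.symm k) = (Finset.univ.erase k).map σ.symm.toEmbedding := by
        rw [Finset.map_erase, Finset.map_univ_equiv]
        rfl
      rw [hset, Finset.prod_map]
      rfl
    simp_rw [hinner]
    exact Equiv.sum_comp σ.symm (fun m => ∏ l ∈ Finset.univ.erase m, f l)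
  rw [hnum, hsum]
  -- denominators: conj disappears
  have hconj : (∏ q ∈ Finset.univ.erase j, conj (lam j - lam q))
      = ∏ q ∈ Finset.univ.erase j, (lam j - lam q) := by
    apply Finset.prod_congr rfl
    intro q _
    rw [map_sub, hreal, hreal]
  rw [hconj]
  by_cases hij : i = j
  · subst hij
    rw [if_pos rfl]
    have hone : (∑ m, ∏ l ∈ Finset.univ.erase m, f l) = ∏ l ∈ Finset.univ.erase i, f l := by
      apply Finset.sum_eq_single i
      · intro m _ hm
        apply Finset.prod_eq_zero (Finset.mem_erase.mpr ⟨fun h => hm h.symm, Finset.mem_univ i⟩)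
        simp [hfdef]
      · intro h; exact absurd (Finset.mem_univ i) h
    rw [hone, hfdef, Finset.prod_mul_distrib]
    apply div_self
    apply mul_ne_zero <;>
    · apply Finset.prod_ne_zero_iff.mpr
      intro l hl
      exact sub_ne_zero.mpr fun h => (Finset.mem_erase.mp hl).1 (hd h).symm
  · rw [if_neg hij]
    have hzero : (∑ m, ∏ l ∈ Finset.univ.erase m, f l) = 0 := by
      apply Finset.sum_eq_zero
      intro m _
      by_cases hmi : m = i
      · subst hmi
        apply Finset.prod_eq_zero (Finset.mem_erase.mpr ⟨fun h => hij h.symm, Finset.mem_univ j⟩)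
        simp [hfdef]
      · apply Finset.prod_eq_zero (Finset.mem_erase.mpr ⟨fun h => hmi h.symm, Finset.mem_univ i⟩)
        simp [hfdef]
    rw [hzero, zero_div]
end

section
/- Let J be an N×N complex matrix with distinct eigenvalues λ_1, ..., λ_N. Then the diagonal quantity O_{ii} := (∑_{k=1}^N det(((λ_i I - J)(λ_i I - J)*)_{k|k})) / ∏_{p ≠ i} |λ_i - λ_p|^2 is a real number satisfying O_{ii} ≥ 1. -/
open Finset Polynomial Matrix

private lemma mat_cancel {R : Type*} [CommRing R] [IsDomain R] {m : Type*} [DecidableEq m]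
    [Fintype m] {A T S : Matrix m m R} (hdet : A.det ≠ 0) (h : A * T = A * S) : T = S := by
  have h2 : A.det • T = A.det • S := by
    calc A.det • T = (adjugate A * A) * T := by rw [adjugate_mul, smul_mul, one_mul]
    _ = (adjugate A * A) * S := by rw [mul_assoc, h, mul_assoc]
    _ = A.det • S := by rw [adjugate_mul, smul_mul, one_mul]
  ext i j
  have := congrFun (congrFun h2 i) j
  simp only [Matrix.smul_apply, smul_eq_mul] at this
  exact mul_left_cancel₀ hdet this

private lemma aeval_mulVec {m : Type*} [DecidableEq m] [Fintype m]
    (J : Matrix m m ℂ) (v : m → ℂ) (μ : ℂ) (hv : J.mulVec v = μ • v) (p : ℂ[X]) :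
    (aeval J p).mulVec v = p.eval μ • v := by
  induction p using Polynomial.induction_on with
  | C a => simp [Algebra.algebraMap_eq_smul_one, Matrix.smul_mulVec, Matrix.one_mulVec]
  | add p q hp hq => simp [add_mulVec, hp, hq, add_smul]
  | monomial k a ih =>
      have h1 : (aeval J) (C a * X ^ (k+1)) = (aeval J) (C a * X ^ k) * J := by
        rw [pow_succ, ← mul_assoc]
        simp
      rw [h1, ← Matrix.mulVec_mulVec, hv, Matrix.mulVec_smul, ih]
      rw [smul_smul, eval_mul, eval_mul, eval_pow, eval_pow, eval_C, eval_X, pow_succ]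
      ring_nf


private lemma adj_eq {n : ℕ} (J : Matrix (Fin (n+1)) (Fin (n+1)) ℂ)
    (lam : Fin (n+1) → ℂ) (hJ : J.charpoly = ∏ j, (X - C (lam j))) (i : Fin (n+1)) :
    adjugate (lam i • (1 : Matrix (Fin (n+1)) (Fin (n+1)) ℂ) - J)
      = aeval J (∏ p ∈ univ.erase i, (X - C (lam p))) := by
  classical
  set ψ : ℂ[X] := J.charpoly with hψ
  set F : Polynomial (ℂ[X]) := Polynomial.C ψ - ψ.map (C : ℂ →+* ℂ[X]) with hF
  have hroot : F.IsRoot (Polynomial.X : ℂ[X]) := by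
    simp [hF, Polynomial.IsRoot, eval_map, eval₂_C_X]
  obtain ⟨q, hq⟩ := Polynomial.dvd_iff_isRoot.mpr hroot
  set 𝕁 : Matrix (Fin (n+1)) (Fin (n+1)) ℂ[X] := (C : ℂ →+* ℂ[X]).mapMatrix J with h𝕁
  -- aeval of F at 𝕁
  have hmapzero : aeval 𝕁 (ψ.map (C : ℂ →+* ℂ[X])) = 0 := by
    have h1 : aeval 𝕁 (ψ.map (C : ℂ →+* ℂ[X]))
        = eval₂ ((algebraMap ℂ[X] (Matrix (Fin (n+1)) (Fin (n+1)) ℂ[X])).comp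
            (C : ℂ →+* ℂ[X])) 𝕁 ψ := by
      rw [aeval_def, eval₂_map]
    have h2 : ((C : ℂ →+* ℂ[X]).mapMatrix :
          Matrix (Fin (n+1)) (Fin (n+1)) ℂ →+* Matrix (Fin (n+1)) (Fin (n+1)) ℂ[X])
          (aeval J ψ)
        = eval₂ ((((C : ℂ →+* ℂ[X]).mapMatrix :
            Matrix (Fin (n+1)) (Fin (n+1)) ℂ →+* Matrix (Fin (n+1)) (Fin (n+1)) ℂ[X])).comp
            (algebraMap ℂ (Matrix (Fin (n+1)) (Fin (n+1)) ℂ))) 𝕁 ψ := by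
      rw [aeval_def, hom_eval₂, h𝕁]
    have h3 : ((algebraMap ℂ[X] (Matrix (Fin (n+1)) (Fin (n+1)) ℂ[X])).comp
            (C : ℂ →+* ℂ[X]))
        = (((C : ℂ →+* ℂ[X]).mapMatrix :
            Matrix (Fin (n+1)) (Fin (n+1)) ℂ →+* Matrix (Fin (n+1)) (Fin (n+1)) ℂ[X])).comp
            (algebraMap ℂ (Matrix (Fin (n+1)) (Fin (n+1)) ℂ)) := by
      ext z a b
      simp [Matrix.algebraMap_matrix_apply, apply_ite]
    rw [h1, h3, ← h2, hψ, aeval_self_charpoly, map_zero]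
  have hFval : aeval 𝕁 F = ψ • (1 : Matrix (Fin (n+1)) (Fin (n+1)) ℂ[X]) := by
    rw [hF, map_sub, hmapzero, sub_zero, aeval_C, Algebra.algebraMap_eq_smul_one]
  have hQval : aeval 𝕁 F = -(charmatrix J) * aeval 𝕁 q := by
    rw [hq, _root_.map_mul, map_sub, aeval_X, aeval_C, Algebra.algebraMap_eq_smul_one]
    congr 1
    rw [charmatrix, h𝕁]
    ext a b
    simp [Matrix.smul_apply, Matrix.one_apply, Matrix.scalar_apply, Matrix.diagonal_apply,
      apply_ite, smul_eq_mul, mul_one]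
  -- cancellation
  have hdet0 : (charmatrix J).det ≠ 0 := by
    rw [← Matrix.charpoly]
    exact J.charpoly_monic.ne_zero
  have hcm : charmatrix J * adjugate (charmatrix J) = charmatrix J * (-(aeval 𝕁 q)) := by
    rw [mul_adjugate, ← Matrix.charpoly, ← hψ, mul_neg, ← neg_mul, ← hQval, hFval]
  have hadjcm : adjugate (charmatrix J) = -(aeval 𝕁 q) := mat_cancel hdet0 hcm
  set ev : ℂ[X] →+* ℂ := evalRingHom (lam i) with hev
  have hB : (ev.mapMatrix : Matrix (Fin (n+1)) (Fin (n+1)) ℂ[X] →+* Matrix (Fin (n+1)) (Fin (n+1)) ℂ) (charmatrix J)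
      = lam i • (1 : Matrix (Fin (n+1)) (Fin (n+1)) ℂ) - J := by
    ext a b
    rcases eq_or_ne a b with h | h
    · subst h
      simp [RingHom.mapMatrix_apply, Matrix.map_apply, Matrix.smul_apply, Matrix.one_apply, hev]
    · simp [RingHom.mapMatrix_apply, Matrix.map_apply, charmatrix_apply_ne _ _ _ h,
        Matrix.smul_apply, Matrix.one_apply_ne h, hev]
  have hadjB : adjugate (lam i • (1 : Matrix (Fin (n+1)) (Fin (n+1)) ℂ) - J)
      = ev.mapMatrix (-(aeval 𝕁 q)) := by
    rw [← hB, ← RingHom.map_adjugate, hadjcm]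
  have hQ : (ev.mapMatrix : Matrix (Fin (n+1)) (Fin (n+1)) ℂ[X] →+* Matrix (Fin (n+1)) (Fin (n+1)) ℂ)
      (aeval 𝕁 q) = aeval J (q.map ev) := by
    rw [aeval_def, hom_eval₂, aeval_def, eval₂_map]
    congr 1
    · refine Polynomial.ringHom_ext (fun z => ?_) ?_
      · ext a b
        rcases eq_or_ne a b with h | h
        · subst h
          simp [Matrix.algebraMap_matrix_apply, hev]
        · simp [Matrix.algebraMap_matrix_apply, h, hev]
      · ext a b
        rcases eq_or_ne a b with h | h
        · subst h
          simp [Matrix.algebraMap_matrix_apply, hev]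
        · simp [Matrix.algebraMap_matrix_apply, h, hev]
    · rw [h𝕁]
      ext a b
      simp [RingHom.mapMatrix_apply, Matrix.map_apply, hev]
  have hψi : eval (lam i) ψ = 0 := by
    rw [hJ, eval_prod]
    exact Finset.prod_eq_zero (mem_univ i) (by simp)
  have hqev : (X - C (lam i)) * (q.map ev) = -ψ := by
    have hFev : F.map ev = -ψ := by
      rw [hF, Polynomial.map_sub, Polynomial.map_C, Polynomial.map_map]
      have hcomp : ev.comp (C : ℂ →+* ℂ[X]) = RingHom.id ℂ := by
        ext z
        simp [hev]
      rw [hcomp, Polynomial.map_id]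
      simp [hψi, hev]
    have h2 : Polynomial.map ev ((X - C X) * q) = (X - C (lam i)) * q.map ev := by
      rw [Polynomial.map_mul, Polynomial.map_sub, Polynomial.map_X, Polynomial.map_C]
      simp [hev]
    calc (X - C (lam i)) * (q.map ev) = Polynomial.map ev ((X - C X) * q) := h2.symm
      _ = Polynomial.map ev F := by rw [← hq]
      _ = -ψ := hFev
  have hg : ψ = (X - C (lam i)) * ∏ p ∈ univ.erase i, (X - C (lam p)) := by
    rw [hJ, ← Finset.mul_prod_erase _ _ (mem_univ i)]
  have hqg : q.map ev = -∏ p ∈ univ.erase i, (X - C (lam p)) := by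
    have hXC : (X - C (lam i) : ℂ[X]) ≠ 0 := X_sub_C_ne_zero (lam i)
    apply mul_left_cancel₀ hXC
    rw [hqev, hg, mul_neg]
  rw [hadjB, map_neg, hQ, hqg, map_neg, neg_neg]




theorem stmt11 (n : ℕ) (J : Matrix (Fin (n + 1)) (Fin (n + 1)) ℂ)
    (lam : Fin (n + 1) → ℂ) (hd : Function.Injective lam)
    (hJ : J.charpoly = ∏ j, (X - C (lam j)))
    (i : Fin (n + 1)) (O : ℂ)
    (hO : O = (∑ k : Fin (n + 1),
        Matrix.det
          (((lam i • (1 : Matrix (Fin (n + 1)) (Fin (n + 1)) ℂ) - J) *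
            (lam i • (1 : Matrix (Fin (n + 1)) (Fin (n + 1)) ℂ) - J)ᴴ).submatrix
          k.succAbove k.succAbove)) /
      ((∏ p ∈ Finset.univ.erase i, ‖lam i - lam p‖ ^ 2 : ℝ) : ℂ)) :
    O.im = 0 ∧ 1 ≤ O.re := by
  classical
  set B : Matrix (Fin (n + 1)) (Fin (n + 1)) ℂ :=
    lam i • (1 : Matrix (Fin (n + 1)) (Fin (n + 1)) ℂ) - J with hB
  set g : ℂ[X] := ∏ p ∈ univ.erase i, (X - C (lam p)) with hg
  set M : Matrix (Fin (n + 1)) (Fin (n + 1)) ℂ := aeval J g with hM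
  have hadj : adjugate B = M := adj_eq J lam hJ i
  set d : ℂ := ∏ p ∈ univ.erase i, (lam i - lam p) with hdd
  have hgeval : g.eval (lam i) = d := by
    simp [hg, hdd, eval_prod]
  set s : ℝ := ∑ k, ∑ m, Complex.normSq (M k m) with hs
  set D : ℝ := ∏ p ∈ Finset.univ.erase i, ‖lam i - lam p‖ ^ 2 with hD
  -- numerator
  have hnum : (∑ k : Fin (n + 1), Matrix.det ((B * Bᴴ).submatrix k.succAbove k.succAbove))
      = (s : ℂ) := by
    have h1 : ∀ k : Fin (n + 1), Matrix.det ((B * Bᴴ).submatrix k.succAbove k.succAbove)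
        = adjugate (B * Bᴴ) k k := by
      intro k
      rw [adjugate_fin_succ_eq_det_submatrix, ← two_mul, pow_mul, neg_one_sq, one_pow, one_mul]
    have h2 : adjugate (B * Bᴴ) = Mᴴ * M := by
      rw [adjugate_mul_distrib, ← adjugate_conjTranspose, hadj]
    rw [Finset.sum_congr rfl fun k _ => h1 k]
    simp only [h2, Matrix.mul_apply, Matrix.conjTranspose_apply]
    rw [hs]
    push_cast
    rw [Finset.sum_comm]
    congr 1
    ext k
    congr 1
    ext m
    rw [Complex.normSq_eq_conj_mul_self]
    rfl
  -- eigenvector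
  have hdetB : B.det = 0 := by
    have hc : (evalRingHom (lam i)).mapMatrix (charmatrix J) = B := by
      ext a b
      rcases eq_or_ne a b with h | h
      · subst h
        simp [RingHom.mapMatrix_apply, Matrix.map_apply, Matrix.smul_apply, Matrix.one_apply, hB]
      · simp [RingHom.mapMatrix_apply, Matrix.map_apply, charmatrix_apply_ne _ _ _ h,
          Matrix.smul_apply, Matrix.one_apply_ne h, hB]
    rw [← hc, ← RingHom.map_det]
    rw [← Matrix.charpoly, hJ]
    simp only [coe_evalRingHom, eval_prod, eval_sub, eval_X, eval_C]
    exact Finset.prod_eq_zero (mem_univ i) (by simp)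
  obtain ⟨v, hv0, hv⟩ := (Matrix.exists_mulVec_eq_zero_iff.mpr hdetB)
  have hJv : J.mulVec v = lam i • v := by
    have := hv
    rw [hB, Matrix.sub_mulVec, Matrix.smul_mulVec, Matrix.one_mulVec, sub_eq_zero] at this
    exact this.symm
  have hMv : M.mulVec v = d • v := by
    rw [hM, aeval_mulVec J v (lam i) hJv g, hgeval]
  have hrow : ∀ k, Complex.normSq ((M.mulVec v) k)
      ≤ (∑ m, Complex.normSq (M k m)) * (∑ m, Complex.normSq (v m)) := by
    intro k
    have hmv : (M.mulVec v) k = ∑ m, M k m * v m := by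
      simp [Matrix.mulVec, dotProduct]
    calc Complex.normSq ((M.mulVec v) k)
        = ‖(M.mulVec v) k‖ ^ 2 := (Complex.sq_norm _).symm
      _ ≤ (∑ m, ‖M k m‖ * ‖v m‖) ^ 2 := by
          apply pow_le_pow_left₀ (norm_nonneg _)
          rw [hmv]
          refine le_trans (norm_sum_le _ _) ?_
          refine le_of_eq (Finset.sum_congr rfl fun m _ => ?_)
          exact norm_mul _ _
      _ ≤ (∑ m, ‖M k m‖ ^ 2) * (∑ m, ‖v m‖ ^ 2) :=
          Finset.sum_mul_sq_le_sq_mul_sq _ _ _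
      _ = (∑ m, Complex.normSq (M k m)) * (∑ m, Complex.normSq (v m)) := by
          simp [Complex.sq_norm]
  have hvpos : 0 < ∑ m, Complex.normSq (v m) := by
    obtain ⟨m, hm⟩ := Function.ne_iff.mp hv0
    exact Finset.sum_pos' (fun _ _ => Complex.normSq_nonneg _)
      ⟨m, Finset.mem_univ m, Complex.normSq_pos.mpr hm⟩
  have hkey : Complex.normSq d * (∑ m, Complex.normSq (v m))
      ≤ s * (∑ m, Complex.normSq (v m)) := by
    calc Complex.normSq d * (∑ m, Complex.normSq (v m))
        = ∑ k, Complex.normSq ((M.mulVec v) k) := by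
          rw [hMv]
          simp [Complex.normSq_mul, Finset.mul_sum, Pi.smul_apply, smul_eq_mul]
      _ ≤ ∑ k, (∑ m, Complex.normSq (M k m)) * (∑ m, Complex.normSq (v m)) :=
          Finset.sum_le_sum fun k _ => hrow k
      _ = s * (∑ m, Complex.normSq (v m)) := by
          rw [hs, Finset.sum_mul]
  have hDs : Complex.normSq d ≤ s := le_of_mul_le_mul_right hkey hvpos
  have hDd : D = Complex.normSq d := by
    rw [hD, hdd, map_prod]
    exact Finset.prod_congr rfl fun p _ => Complex.sq_norm _
  have hDpos : 0 < D := by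
    rw [hD]
    apply Finset.prod_pos
    intro p hp
    have hne : lam i - lam p ≠ 0 := by
      refine sub_ne_zero.mpr fun h => (Finset.mem_erase.mp hp).1 ?_
      exact (hd h).symm
    exact pow_pos (norm_pos_iff.mpr hne) 2
  have hsD : 1 ≤ s / D := (one_le_div hDpos).mpr (hDd ▸ hDs)
  rw [hO, hnum, ← Complex.ofReal_div]
  exact ⟨Complex.ofReal_im _, by rw [Complex.ofReal_re]; exact hsD⟩
end
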